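/- Let p_1, …, p_N ∈ ℝ^d, and let n_1, …, n_N ≥ 0 (supplies) and m_1, …, m_N ≥ 0 (demands) satisfy Σ_j n_j = Σ_j m_j. A feasible flow is a matrix (f_{jl})_{1 ≤ j,l ≤ N} with f_{jl} ≥ 0, Σ_l f_{jl} = n_j for every j, and Σ_j f_{jl} = m_l for every l; its cost is Σ_{j,l} f_{jl} ‖p_j − p_l‖. Then the infimum of the cost over all feasible flows equals the infimum of the cost over feasible flows that additionally satisfy f_{jj} = min{n_j, m_j} for every 1 ≤ j ≤ N; in particular, there is a cost-minimizing feasible flow whose diagonal entries are f_{jj} = min{n_j, m_j} for all j. -/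

import Mathlib

noncomputable section

/-- A feasible flow for a transportation instance on common locations, with supplies `n`
and demands `m`. -/
def IsFeasibleLocFlow {N : ℕ} (n m : Fin N → ℝ) (f : Fin N → Fin N → ℝ) : Prop :=
  (∀ j l, 0 ≤ f j l) ∧ (∀ j, ∑ l, f j l = n j) ∧ (∀ l, ∑ j, f j l = m l)

/-- The cost of a flow `f` on locations `p`. -/
def flowCost {d N : ℕ} (p : Fin N → EuclideanSpace ℝ (Fin d))
    (f : Fin N → Fin N → ℝ) : ℝ :=
  ∑ j, ∑ l, f j l * ‖p j - p l‖

section Aux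

variable {d N : ℕ}

lemma flowCost_nonneg (p : Fin N → EuclideanSpace ℝ (Fin d)) {n m : Fin N → ℝ}
    {f : Fin N → Fin N → ℝ} (hf : IsFeasibleLocFlow n m f) : 0 ≤ flowCost p f :=
  Finset.sum_nonneg fun j _ => Finset.sum_nonneg fun l _ =>
    mul_nonneg (hf.1 j l) (norm_nonneg _)

lemma transpose_feasible {n m : Fin N → ℝ} {f : Fin N → Fin N → ℝ}
    (hf : IsFeasibleLocFlow n m f) : IsFeasibleLocFlow m n (fun k l => f l k) :=
  ⟨fun j l => hf.1 l j, fun j => hf.2.2 j, fun l => hf.2.1 l⟩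

lemma transpose_cost (p : Fin N → EuclideanSpace ℝ (Fin d)) (f : Fin N → Fin N → ℝ) :
    flowCost p (fun k l => f l k) = flowCost p f := by
  unfold flowCost
  rw [Finset.sum_comm]
  refine Finset.sum_congr rfl fun j _ => Finset.sum_congr rfl fun l _ => ?_
  rw [norm_sub_rev]

lemma row_erase {n m : Fin N → ℝ} {f : Fin N → Fin N → ℝ}
    (hf : IsFeasibleLocFlow n m f) (j : Fin N) :
    ∑ l ∈ Finset.univ.erase j, f j l = n j - f j j := by
  have := Finset.sum_erase_add Finset.univ (f j) (Finset.mem_univ j)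
  rw [hf.2.1 j] at this
  linarith

lemma col_erase {n m : Fin N → ℝ} {f : Fin N → Fin N → ℝ}
    (hf : IsFeasibleLocFlow n m f) (j : Fin N) :
    ∑ k ∈ Finset.univ.erase j, f k j = m j - f j j := by
  have := Finset.sum_erase_add Finset.univ (fun k => f k j) (Finset.mem_univ j)
  rw [hf.2.2 j] at this
  linarith

/-- One-step rerouting in the case `n j ≤ m j`. -/
lemma step_le (p : Fin N → EuclideanSpace ℝ (Fin d)) (n m : Fin N → ℝ)
    (hn : ∀ j, 0 ≤ n j) (j : Fin N) (hj : n j ≤ m j)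
    (f : Fin N → Fin N → ℝ) (hf : IsFeasibleLocFlow n m f) :
    ∃ g, IsFeasibleLocFlow n m g ∧ g j j = min (n j) (m j) ∧
      (∀ k, f k k = min (n k) (m k) → g k k = min (n k) (m k)) ∧
      flowCost p g ≤ flowCost p f := by
  classical
  obtain ⟨hpos, hrow, hcol⟩ := hf
  have hfeas : IsFeasibleLocFlow n m f := ⟨hpos, hrow, hcol⟩
  have hδ' : ∑ l ∈ Finset.univ.erase j, f j l = n j - f j j := row_erase hfeas j
  have hB' : ∑ k ∈ Finset.univ.erase j, f k j = m j - f j j := col_erase hfeas j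
  set δ : ℝ := n j - f j j with hδdef
  set B : ℝ := m j - f j j with hBdef
  have hδ0 : 0 ≤ δ := hδ' ▸ Finset.sum_nonneg fun l _ => hpos j l
  have hδB : δ ≤ B := by rw [hδdef, hBdef]; linarith
  by_cases hδz : δ = 0
  · refine ⟨f, hfeas, ?_, fun k hk => hk, le_rfl⟩
    have hfjj : f j j = n j := by rw [hδdef] at hδz; linarith
    rw [hfjj, min_eq_left hj]
  · have hBpos : 0 < B := lt_of_lt_of_le (lt_of_le_of_ne hδ0 (Ne.symm hδz)) hδB
    have hBne : B ≠ 0 := ne_of_gt hBpos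
    set g : Fin N → Fin N → ℝ := fun k l =>
      if k = j then (if l = j then n j else 0)
      else if l = j then f k j * (B - δ) / B
      else f k l + f k j * f j l / B with hgdef
    have hgjj : g j j = n j := by simp [hgdef]
    have hgjl : ∀ l, l ≠ j → g j l = 0 := by intro l hl; simp [hgdef, hl]
    have hgkj : ∀ k, k ≠ j → g k j = f k j * (B - δ) / B := by
      intro k hk; simp [hgdef, hk]
    have hgkl : ∀ k l, k ≠ j → l ≠ j → g k l = f k l + f k j * f j l / B := by
      intro k l hk hl; simp [hgdef, hk, hl]
    have hgpos : ∀ k l, 0 ≤ g k l := by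
      intro k l
      by_cases hk : k = j <;> by_cases hl : l = j <;> simp [hgdef, hk, hl]
      · exact hn j
      · exact div_nonneg (mul_nonneg (hpos k j) (by linarith)) hBpos.le
      · exact add_nonneg (hpos k l)
          (div_nonneg (mul_nonneg (hpos k j) (hpos j l)) hBpos.le)
    have hrow_erase : ∀ k : Fin N, ∑ l ∈ Finset.univ.erase j, f k l = n k - f k j := by
      intro k
      have := Finset.sum_erase_add Finset.univ (f k) (Finset.mem_univ j)
      rw [hrow k] at this; linarith
    have hcol_erase : ∀ l : Fin N, ∑ k ∈ Finset.univ.erase j, f k l = m l - f j l := by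
      intro l
      have := Finset.sum_erase_add Finset.univ (fun k => f k l) (Finset.mem_univ j)
      rw [hcol l] at this; linarith
    have hgrow : ∀ k, ∑ l, g k l = n k := by
      intro k
      by_cases hk : k = j
      · subst hk
        rw [← Finset.sum_erase_add Finset.univ _ (Finset.mem_univ k), hgjj,
          Finset.sum_eq_zero (fun l hl => hgjl l (Finset.ne_of_mem_erase hl)), zero_add]
      · rw [← Finset.sum_erase_add Finset.univ _ (Finset.mem_univ j), hgkj k hk,
          Finset.sum_congr rfl (fun l hl => hgkl k l hk (Finset.ne_of_mem_erase hl)),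
          Finset.sum_add_distrib]
        have h2 : ∑ l ∈ Finset.univ.erase j, f k j * f j l / B
            = f k j * δ / B := by
          rw [← Finset.sum_div, ← Finset.mul_sum, hδ']
        rw [h2, hrow_erase k]
        field_simp
        ring
    have hgcol : ∀ l, ∑ k, g k l = m l := by
      intro l
      by_cases hl : l = j
      · subst hl
        rw [← Finset.sum_erase_add Finset.univ _ (Finset.mem_univ l), hgjj,
          Finset.sum_congr rfl (fun k hk => hgkj k (Finset.ne_of_mem_erase hk)),
          ← Finset.sum_div, ← Finset.sum_mul, hB']
        have h3 : B * (B - δ) / B = B - δ := by field_simp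
        rw [h3, hBdef, hδdef]; ring
      · rw [← Finset.sum_erase_add Finset.univ _ (Finset.mem_univ j), hgjl l hl,
          Finset.sum_congr rfl (fun k hk => hgkl k l (Finset.ne_of_mem_erase hk) hl),
          Finset.sum_add_distrib]
        have h2 : ∑ k ∈ Finset.univ.erase j, f k j * f j l / B
            = B * f j l / B := by
          rw [← Finset.sum_div, ← Finset.sum_mul, hB']
        rw [h2, hcol_erase l]
        field_simp
        ring
    have hgfeas : IsFeasibleLocFlow n m g := ⟨hgpos, hgrow, hgcol⟩
    refine ⟨g, hgfeas, by rw [hgjj, min_eq_left hj], ?_, ?_⟩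
    · -- preservation of diagonal entries
      intro k hk
      by_cases hkj : k = j
      · subst hkj; rw [hgjj, min_eq_left hj]
      · rw [hgkl k k hkj hkj]
        have hzero : f k j * f j k = 0 := by
          rcases le_total (n k) (m k) with h | h
          · have hkk : f k k = n k := by rw [hk, min_eq_left h]
            have : ∑ l ∈ Finset.univ.erase k, f k l = 0 := by
              have h4 := Finset.sum_erase_add Finset.univ (f k) (Finset.mem_univ k)
              rw [hrow k, hkk] at h4
              linarith
            have hfkj : f k j = 0 := by
              have hmem : j ∈ Finset.univ.erase k :=
                Finset.mem_erase.2 ⟨fun hh => hkj hh.symm, Finset.mem_univ j⟩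
              have := (Finset.sum_eq_zero_iff_of_nonneg
                (fun l _ => hpos k l)).1 this j hmem
              exact this
            rw [hfkj, zero_mul]
          · have hkk : f k k = m k := by rw [hk, min_eq_right h]
            have : ∑ l ∈ Finset.univ.erase k, (fun i => f i k) l = 0 := by
              have h4 := Finset.sum_erase_add Finset.univ (fun i => f i k)
                (Finset.mem_univ k)
              rw [hcol k] at h4
              simp only at h4 ⊢
              rw [hkk] at h4
              linarith
            have hfjk : f j k = 0 := by
              have hmem : j ∈ Finset.univ.erase k :=
                Finset.mem_erase.2 ⟨fun hh => hkj hh.symm, Finset.mem_univ j⟩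
              exact (Finset.sum_eq_zero_iff_of_nonneg
                (fun l _ => hpos l k)).1 this j hmem
            rw [hfjk, mul_zero]
        rw [hzero, zero_div, add_zero]
        exact hk
    · -- cost comparison
      have hsplit : ∀ h : Fin N → Fin N → ℝ, flowCost p h =
          (∑ k ∈ Finset.univ.erase j,
            ((∑ l ∈ Finset.univ.erase j, h k l * ‖p k - p l‖) + h k j * ‖p k - p j‖)) +
          ((∑ l ∈ Finset.univ.erase j, h j l * ‖p j - p l‖) + h j j * ‖p j - p j‖) := by
        intro h
        unfold flowCost
        rw [← Finset.sum_erase_add Finset.univ _ (Finset.mem_univ j)]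
        congr 1
        · refine Finset.sum_congr rfl fun k _ => ?_
          rw [← Finset.sum_erase_add Finset.univ _ (Finset.mem_univ j)]
        · rw [← Finset.sum_erase_add Finset.univ _ (Finset.mem_univ j)]
      rw [hsplit g, hsplit f]
      have hjj0 : ‖p j - p j‖ = (0 : ℝ) := by simp
      have hzero2 : ∑ l ∈ Finset.univ.erase j, g j l * ‖p j - p l‖ = 0 :=
        Finset.sum_eq_zero fun l hl => by
          rw [hgjl l (Finset.ne_of_mem_erase hl), zero_mul]
      rw [hjj0, mul_zero, mul_zero, add_zero, add_zero, hzero2, add_zero]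
      set S : ℝ := ∑ l ∈ Finset.univ.erase j, f j l * ‖p j - p l‖ with hSdef
      have hS1 : ∑ k ∈ Finset.univ.erase j, f k j / B * S = S := by
        rw [← Finset.sum_mul, ← Finset.sum_div, hB', div_self hBne, one_mul]
      rw [← hS1, ← Finset.sum_add_distrib]
      refine Finset.sum_le_sum fun k hk => ?_
      have hkj : k ≠ j := Finset.ne_of_mem_erase hk
      rw [hgkj k hkj,
        Finset.sum_congr rfl (fun l hl => by
          rw [hgkl k l hkj (Finset.ne_of_mem_erase hl)]),
        Finset.sum_congr rfl (fun l _ => (add_mul (f k l) (f k j * f j l / B) _)),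
        Finset.sum_add_distrib]
      have key : ∑ l ∈ Finset.univ.erase j, f k j * f j l / B * ‖p k - p l‖
          ≤ ∑ l ∈ Finset.univ.erase j, f k j * f j l / B * (‖p k - p j‖ + ‖p j - p l‖) := by
        refine Finset.sum_le_sum fun l _ => ?_
        refine mul_le_mul_of_nonneg_left (norm_sub_le_norm_sub_add_norm_sub _ _ _) ?_
        exact div_nonneg (mul_nonneg (hpos k j) (hpos j l)) hBpos.le
      have expand : ∑ l ∈ Finset.univ.erase j,
          f k j * f j l / B * (‖p k - p j‖ + ‖p j - p l‖)
          = f k j / B * δ * ‖p k - p j‖ + f k j / B * S := by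
        have hterm : ∀ l, f k j * f j l / B * (‖p k - p j‖ + ‖p j - p l‖)
            = f k j / B * (f j l * ‖p k - p j‖) + f k j / B * (f j l * ‖p j - p l‖) := by
          intro l; ring
        rw [Finset.sum_congr rfl (fun l _ => hterm l), Finset.sum_add_distrib,
          ← Finset.mul_sum, ← Finset.mul_sum, ← Finset.sum_mul, hδ']
        ring
      have hfe : f k j * (B - δ) / B * ‖p k - p j‖ + f k j / B * δ * ‖p k - p j‖
          = f k j * ‖p k - p j‖ := by field_simp; ring
      rw [expand] at key
      linarith [key, hfe]

/-- One-step rerouting, general case. -/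
lemma step (p : Fin N → EuclideanSpace ℝ (Fin d)) (n m : Fin N → ℝ)
    (hn : ∀ j, 0 ≤ n j) (hm : ∀ l, 0 ≤ m l) (j : Fin N)
    (f : Fin N → Fin N → ℝ) (hf : IsFeasibleLocFlow n m f) :
    ∃ g, IsFeasibleLocFlow n m g ∧ g j j = min (n j) (m j) ∧
      (∀ k, f k k = min (n k) (m k) → g k k = min (n k) (m k)) ∧
      flowCost p g ≤ flowCost p f := by
  rcases le_total (n j) (m j) with h | h
  · exact step_le p n m hn j h f hf
  · obtain ⟨g, hg, hgj, hpres, hcost⟩ :=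
      step_le p m n hm j h (fun k l => f l k) (transpose_feasible hf)
    refine ⟨fun k l => g l k, transpose_feasible hg, ?_, ?_, ?_⟩
    · rw [min_comm]; exact hgj
    · intro k hk
      rw [min_comm]
      exact hpres k (by rw [min_comm]; exact hk)
    · calc flowCost p (fun k l => g l k) = flowCost p g := transpose_cost p g
        _ ≤ flowCost p (fun k l => f l k) := hcost
        _ = flowCost p f := transpose_cost p f

/-- Diagonalize all indices. -/
lemma diag_all (p : Fin N → EuclideanSpace ℝ (Fin d)) (n m : Fin N → ℝ)
    (hn : ∀ j, 0 ≤ n j) (hm : ∀ l, 0 ≤ m l)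
    (f : Fin N → Fin N → ℝ) (hf : IsFeasibleLocFlow n m f) :
    ∃ g, IsFeasibleLocFlow n m g ∧ (∀ j, g j j = min (n j) (m j)) ∧
      flowCost p g ≤ flowCost p f := by
  suffices h : ∀ S : Finset (Fin N), ∃ g, IsFeasibleLocFlow n m g ∧
      (∀ j ∈ S, g j j = min (n j) (m j)) ∧ flowCost p g ≤ flowCost p f by
    obtain ⟨g, h1, h2, h3⟩ := h Finset.univ
    exact ⟨g, h1, fun j => h2 j (Finset.mem_univ j), h3⟩
  intro S
  induction S using Finset.induction with
  | empty => exact ⟨f, hf, by simp, le_rfl⟩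
  | @insert j S hj IH =>
    obtain ⟨g, hg, hdiag, hcost⟩ := IH
    obtain ⟨g', hg', hj', hpres, hcost'⟩ := step p n m hn hm j g hg
    refine ⟨g', hg', fun k hk => ?_, hcost'.trans hcost⟩
    rcases Finset.mem_insert.1 hk with rfl | hk
    · exact hj'
    · exact hpres k (hdiag k hk)

lemma exists_feasible (n m : Fin N → ℝ) (hn : ∀ j, 0 ≤ n j) (hm : ∀ l, 0 ≤ m l)
    (hbal : ∑ j, n j = ∑ l, m l) : ∃ f, IsFeasibleLocFlow n m f := by
  set T : ℝ := ∑ j, n j with hT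
  by_cases hT0 : T = 0
  · have hn0 : ∀ j, n j = 0 := fun j =>
      le_antisymm (hT0 ▸ Finset.single_le_sum (fun i _ => hn i) (Finset.mem_univ j)) (hn j)
    have hm0 : ∀ l, m l = 0 := fun l =>
      le_antisymm (by
        have : ∑ l, m l = 0 := by rw [← hbal, hT0]
        exact this ▸ Finset.single_le_sum (fun i _ => hm i) (Finset.mem_univ l)) (hm l)
    exact ⟨0, fun j l => le_rfl, fun j => by simp [hn0 j], fun l => by simp [hm0 l]⟩
  · have hTnn : 0 ≤ T := Finset.sum_nonneg fun i _ => hn i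
    refine ⟨fun j l => n j * m l / T,
      fun j l => div_nonneg (mul_nonneg (hn j) (hm l)) hTnn, fun j => ?_, fun l => ?_⟩
    · rw [← Finset.sum_div, ← Finset.mul_sum, ← hbal, mul_div_assoc,
        div_self hT0, mul_one]
    · rw [← Finset.sum_div, ← Finset.sum_mul, mul_comm, mul_div_assoc,
        div_self hT0, mul_one]

end Aux

/-- **Claim 2.** For a transportation instance on common locations `p` with supplies `n`
and demands `m` of equal totals, the infimum of the cost over all feasible flows equals
the infimum over feasible flows satisfying `f j j = min (n j) (m j)` for all `j`;
in particular some cost-minimizing feasible flow has these diagonal entries. -/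
theorem exists_optimal_flow_with_diagonal
    {d N : ℕ} (p : Fin N → EuclideanSpace ℝ (Fin d))
    (n m : Fin N → ℝ) (hn : ∀ j, 0 ≤ n j) (hm : ∀ l, 0 ≤ m l)
    (hbal : ∑ j, n j = ∑ l, m l) :
    sInf {c : ℝ | ∃ f, IsFeasibleLocFlow n m f ∧ c = flowCost p f} =
      sInf {c : ℝ | ∃ f, IsFeasibleLocFlow n m f ∧
        (∀ j, f j j = min (n j) (m j)) ∧ c = flowCost p f} ∧
    ∃ f, IsFeasibleLocFlow n m f ∧ (∀ j, f j j = min (n j) (m j)) ∧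
      flowCost p f = sInf {c : ℝ | ∃ f, IsFeasibleLocFlow n m f ∧ c = flowCost p f} := by
  classical
  set K : Set (Fin N → Fin N → ℝ) :=
    {f | IsFeasibleLocFlow n m f ∧ ∀ j, f j j = min (n j) (m j)} with hKdef
  have hKne : K.Nonempty := by
    obtain ⟨f, hf⟩ := exists_feasible n m hn hm hbal
    obtain ⟨g, hg, hdiag, _⟩ := diag_all p n m hn hm f hf
    exact ⟨g, hg, hdiag⟩
  have happ : ∀ j l : Fin N, Continuous fun f : Fin N → Fin N → ℝ => f j l :=
    fun j l => (continuous_apply l).comp (continuous_apply j)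
  have hcont : Continuous (flowCost p (N := N)) := by
    unfold flowCost
    exact continuous_finset_sum _ fun j _ => continuous_finset_sum _ fun l _ =>
      (happ j l).mul continuous_const
  have hKclosed : IsClosed K := by
    have h1 : IsClosed {f : Fin N → Fin N → ℝ | ∀ j l, 0 ≤ f j l} := by
      have : {f : Fin N → Fin N → ℝ | ∀ j l, 0 ≤ f j l}
          = ⋂ j, ⋂ l, {f | 0 ≤ f j l} := by ext f; simp [Set.mem_iInter]
      rw [this]
      exact isClosed_iInter fun j => isClosed_iInter fun l =>
        isClosed_le continuous_const (happ j l)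
    have h2 : IsClosed {f : Fin N → Fin N → ℝ | ∀ j, ∑ l, f j l = n j} := by
      have : {f : Fin N → Fin N → ℝ | ∀ j, ∑ l, f j l = n j}
          = ⋂ j, {f | ∑ l, f j l = n j} := by ext f; simp [Set.mem_iInter]
      rw [this]
      exact isClosed_iInter fun j =>
        isClosed_eq (continuous_finset_sum _ fun l _ => happ j l) continuous_const
    have h3 : IsClosed {f : Fin N → Fin N → ℝ | ∀ l, ∑ j, f j l = m l} := by
      have : {f : Fin N → Fin N → ℝ | ∀ l, ∑ j, f j l = m l}
          = ⋂ l, {f | ∑ j, f j l = m l} := by ext f; simp [Set.mem_iInter]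
      rw [this]
      exact isClosed_iInter fun l =>
        isClosed_eq (continuous_finset_sum _ fun j _ => happ j l) continuous_const
    have h4 : IsClosed {f : Fin N → Fin N → ℝ | ∀ j, f j j = min (n j) (m j)} := by
      have : {f : Fin N → Fin N → ℝ | ∀ j, f j j = min (n j) (m j)}
          = ⋂ j, {f | f j j = min (n j) (m j)} := by ext f; simp [Set.mem_iInter]
      rw [this]
      exact isClosed_iInter fun j => isClosed_eq (happ j j) continuous_const
    have : K = ({f : Fin N → Fin N → ℝ | ∀ j l, 0 ≤ f j l}
        ∩ {f | ∀ j, ∑ l, f j l = n j} ∩ {f | ∀ l, ∑ j, f j l = m l})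
        ∩ {f | ∀ j, f j j = min (n j) (m j)} := by
      ext f
      constructor
      · rintro ⟨⟨a, b, c⟩, hd⟩; exact ⟨⟨⟨a, b⟩, c⟩, hd⟩
      · rintro ⟨⟨⟨a, b⟩, c⟩, hd⟩; exact ⟨⟨a, b, c⟩, hd⟩
    rw [this]
    exact (((h1.inter h2).inter h3).inter h4)
  have hKsub : K ⊆ Set.univ.pi fun _ : Fin N =>
      Set.univ.pi fun _ : Fin N => Set.Icc (0 : ℝ) (∑ i, n i) := by
    rintro f ⟨⟨hpos, hrow, hcol⟩, _⟩ j _ l _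
    refine ⟨hpos j l, ?_⟩
    have h1 : f j l ≤ n j := by
      rw [← hrow j]
      exact Finset.single_le_sum (fun i _ => hpos j i) (Finset.mem_univ l)
    exact h1.trans (Finset.single_le_sum (fun i _ => hn i) (Finset.mem_univ j))
  have hKcompact : IsCompact K :=
    (isCompact_univ_pi fun _ => isCompact_univ_pi fun _ => isCompact_Icc).of_isClosed_subset
      hKclosed hKsub
  obtain ⟨f₀, hf₀K, hmin⟩ := hKcompact.exists_isMinOn hKne hcont.continuousOn
  have hmin' : ∀ g ∈ K, flowCost p f₀ ≤ flowCost p g := fun g hg => hmin hg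
  have hleastB : IsLeast {c : ℝ | ∃ f, IsFeasibleLocFlow n m f ∧
      (∀ j, f j j = min (n j) (m j)) ∧ c = flowCost p f} (flowCost p f₀) := by
    constructor
    · exact ⟨f₀, hf₀K.1, hf₀K.2, rfl⟩
    · rintro c ⟨f, hf, hd, rfl⟩
      exact hmin' f ⟨hf, hd⟩
  have hleastA : IsLeast {c : ℝ | ∃ f, IsFeasibleLocFlow n m f ∧ c = flowCost p f}
      (flowCost p f₀) := by
    constructor
    · exact ⟨f₀, hf₀K.1, rfl⟩
    · rintro c ⟨f, hf, rfl⟩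
      obtain ⟨g, hg, hd, hc⟩ := diag_all p n m hn hm f hf
      exact (hmin' g ⟨hg, hd⟩).trans hc
  refine ⟨by rw [hleastA.csInf_eq, hleastB.csInf_eq], f₀, hf₀K.1, hf₀K.2, ?_⟩
  rw [hleastA.csInf_eq]
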